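/- arXiv:2104.03124 — 3 statements merged into one kernel-verified Lean document; each statement's English description precedes it below -/
import Mathlib

section
/- Let $(\phi_k)_{k=1}^n$ be functions in $L^2(0,1)$ that are pairwise orthogonal. Then $\left\|\max_{1\le m\le n}\left|\sum_{k=1}^m \phi_k\right|\right\|_{L^2} \le c \log(n+1) \left\|\sum_{k=1}^n \phi_k\right\|_{L^2}$ for some absolute constant $c>0$. -/
open MeasureTheory Set


lemma MR_mul_integrable {μ : Measure ℝ} {f g : ℝ → ℝ} (hf : MemLp f 2 μ) (hg : MemLp g 2 μ) :
    Integrable (fun x => f x * g x) μ := by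
  have h : (fun x => f x * g x) = fun x => ((f x + g x)^2 - f x^2 - g x^2)/2 := by
    funext x; ring
  rw [h]
  exact (((hf.add hg).integrable_sq.sub hf.integrable_sq).sub hg.integrable_sq).div_const 2

lemma MR_integral_sq_sum {μ : Measure ℝ} (φ : ℕ → ℝ → ℝ) (s : Finset ℕ)
    (hmem : ∀ k ∈ s, MemLp (φ k) 2 μ)
    (horth : ∀ j ∈ s, ∀ k ∈ s, j ≠ k → ∫ x, φ j x * φ k x ∂μ = 0) :
    ∫ x, (∑ k ∈ s, φ k x)^2 ∂μ = ∑ k ∈ s, ∫ x, (φ k x)^2 ∂μ := by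
  have h1 : ∀ x : ℝ, (∑ k ∈ s, φ k x)^2 = ∑ j ∈ s, ∑ k ∈ s, φ j x * φ k x := by
    intro x; rw [sq, Finset.sum_mul_sum]
  simp_rw [h1]
  rw [integral_finset_sum s (fun j hj => integrable_finset_sum s
    (fun k hk => MR_mul_integrable (hmem j hj) (hmem k hk)))]
  refine Finset.sum_congr rfl (fun j hj => ?_)
  rw [integral_finset_sum s (fun k hk => MR_mul_integrable (hmem j hj) (hmem k hk))]
  rw [Finset.sum_eq_single_of_mem j hj (fun k hk hkj => horth j hj k hk (Ne.symm hkj))]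
  simp_rw [← sq]

lemma MR_eLpNorm_sq {μ : Measure ℝ} (f : ℝ → ℝ) :
    eLpNorm f 2 μ = (∫⁻ x, ENNReal.ofReal (f x ^ 2) ∂μ) ^ (1/2 : ℝ) := by
  rw [eLpNorm_eq_lintegral_rpow_enorm_toReal two_ne_zero ENNReal.ofNat_ne_top]
  have h2 : ((2:ENNReal).toReal) = (2:ℝ) := by simp
  rw [h2]
  congr 1
  refine lintegral_congr (fun x => ?_)
  rw [← ofReal_norm_eq_enorm,
    ENNReal.ofReal_rpow_of_nonneg (norm_nonneg _) (by norm_num)]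
  congr 1
  rw [Real.norm_eq_abs, show ((2:ℝ)) = ((2:ℕ):ℝ) by norm_num, Real.rpow_natCast, sq_abs]

lemma MR_partition (j n : ℕ) (c : ℕ → ℝ) :
    ∑ k ∈ Finset.Ioc 0 n, c k
      = ∑ a ∈ Finset.range n, ∑ k ∈ Finset.Ioc (a*2^j) (min ((a+1)*2^j) n), c k := by
  have hp : 0 < 2^j := Nat.pow_pos (by norm_num)
  have hU : Finset.Ioc 0 n
      = (Finset.range n).biUnion (fun a => Finset.Ioc (a*2^j) (min ((a+1)*2^j) n)) := by
    ext k
    simp only [Finset.mem_Ioc, Finset.mem_biUnion, Finset.mem_range]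
    constructor
    · rintro ⟨hk0, hkn⟩
      refine ⟨(k-1)/2^j, ?_, ?_, le_min ?_ hkn⟩
      · exact lt_of_le_of_lt (Nat.div_le_self _ _) (by omega)
      · exact lt_of_le_of_lt (Nat.div_mul_le_self _ _) (by omega)
      · by_contra hlt
        push_neg at hlt
        have h1 : ((k-1)/2^j + 1) * 2^j ≤ k - 1 := by omega
        have h2 : (k-1)/2^j + 1 ≤ (k-1)/2^j := (Nat.le_div_iff_mul_le hp).mpr h1
        omega
    · rintro ⟨a, han, hak, hka⟩
      exact ⟨by omega, le_trans hka (min_le_right _ _)⟩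
  rw [hU, Finset.sum_biUnion]
  intro a ha b hb hab
  simp only [Function.onFun]
  rw [Finset.disjoint_left]
  intro k hka hkb
  simp only [Finset.mem_Ioc] at hka hkb
  rcases lt_or_gt_of_ne hab with h | h
  · have h1 : (a+1) * 2^j ≤ b * 2^j := Nat.mul_le_mul_right _ (by omega)
    have h2 := le_trans hka.2 (min_le_left _ _)
    have h3 := hkb.1
    omega
  · have h1 : (b+1) * 2^j ≤ a * 2^j := Nat.mul_le_mul_right _ (by omega)
    have h2 := le_trans hkb.2 (min_le_left _ _)
    have h3 := hka.1
    omega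

lemma MR_chain (φ : ℕ → ℝ → ℝ) (n K : ℕ) (hn : 0 < n) (hK : n < 2^K) (x : ℝ) (m : ℕ)
    (hmn : m ≤ n) :
    |∑ k ∈ Finset.Ioc 0 m, φ k x| ≤
      Real.sqrt ((K:ℝ) * ∑ j ∈ Finset.range K, ∑ a ∈ Finset.range n,
        (∑ k ∈ Finset.Ioc (a*2^j) (min ((a+1)*2^j) n), φ k x)^2) := by
  set B : ℕ → ℕ → ℝ := fun j a => ∑ k ∈ Finset.Ioc (a*2^j) (min ((a+1)*2^j) n), φ k x with hB
  set S : ℕ → ℝ := fun r => ∑ k ∈ Finset.Ioc 0 r, φ k x with hS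
  set t : ℕ → ℝ := fun j => Real.sqrt (∑ a ∈ Finset.range n, (B j a)^2) with ht
  have ht_nn : ∀ j, 0 ≤ t j := fun j => Real.sqrt_nonneg _
  have htB : ∀ j, ∀ a, a < n → |B j a| ≤ t j := by
    intro j a ha
    rw [ht, ← Real.sqrt_sq_eq_abs]
    exact Real.sqrt_le_sqrt
      (Finset.single_le_sum (fun i _ => sq_nonneg (B j i)) (Finset.mem_range.mpr ha))
  have htele : S m = ∑ j ∈ Finset.range K, (S (2^j * (m/2^j)) - S (2^(j+1) * (m/2^(j+1)))) := by
    rw [Finset.sum_range_sub' (fun j => S (2^j * (m/2^j))) K]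
    have h0 : 2^0 * (m/2^0) = m := by simp
    have hKK : m / 2^K = 0 := Nat.div_eq_of_lt (lt_of_le_of_lt hmn hK)
    rw [h0, hKK, mul_zero]
    simp [hS]
  have hterm : ∀ j, |S (2^j * (m/2^j)) - S (2^(j+1) * (m/2^(j+1)))| ≤ t j := by
    intro j
    have hpj : 0 < 2^j := Nat.pow_pos (by norm_num)
    have hq : m / 2^(j+1) = (m / 2^j) / 2 := by
      rw [pow_succ, Nat.div_div_eq_div_mul]
    set q := m / 2^j with hqd
    rcases Nat.even_or_odd q with ⟨c, hc⟩ | ⟨c, hc⟩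
    · have heq : 2^(j+1) * (m/2^(j+1)) = 2^j * q := by
        rw [hq, hc, show c + c = 2*c by ring, Nat.mul_div_cancel_left c (by norm_num), pow_succ]
        ring
      rw [heq, sub_self, abs_zero]; exact ht_nn j
    · have hq2 : q / 2 = c := by omega
      have hujn : 2^j * q ≤ n :=
        le_trans (by rw [hqd, mul_comm]; exact Nat.div_mul_le_self m (2^j)) hmn
      have hu1 : 2^(j+1) * (m/2^(j+1)) = (2*c) * 2^j := by rw [hq, hq2, pow_succ]; ring
      have hu0 : 2^j * q = (2*c+1) * 2^j := by rw [hc]; ring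
      have hdiff : S (2^j * q) - S (2^(j+1) * (m/2^(j+1))) = B j (2*c) := by
        rw [hu0, hu1, hB, hS]
        simp only
        have hmin : min ((2*c+1) * 2^j) n = (2*c+1)*2^j := min_eq_left (by rw [← hu0]; exact hujn)
        rw [hmin]
        have hcons := Finset.sum_Ioc_consecutive (fun k => φ k x)
          (Nat.zero_le ((2*c)*2^j))
          (Nat.mul_le_mul_right (2^j) (by omega) : (2*c)*2^j ≤ (2*c+1)*2^j)
        linarith [hcons]
      rw [hdiff]
      apply htB
      have h1 : (2*c)*2^j < (2*c+1)*2^j := (Nat.mul_lt_mul_right hpj).mpr (by omega)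
      have h2 : 2*c ≤ (2*c)*2^j := Nat.le_mul_of_pos_right _ hpj
      have h3 : (2*c+1)*2^j ≤ n := by rw [← hu0]; exact hujn
      omega
  calc |S m| ≤ ∑ j ∈ Finset.range K, |S (2^j*(m/2^j)) - S (2^(j+1)*(m/2^(j+1)))| := by
        rw [htele]; exact Finset.abs_sum_le_sum_abs _ _
    _ ≤ ∑ j ∈ Finset.range K, t j := Finset.sum_le_sum (fun j _ => hterm j)
    _ ≤ Real.sqrt ((K:ℝ) * ∑ j ∈ Finset.range K, (t j)^2) := by
        rw [← Real.sqrt_sq (Finset.sum_nonneg (fun j _ => ht_nn j))]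
        apply Real.sqrt_le_sqrt
        have h := sq_sum_le_card_mul_sum_sq (s := Finset.range K) (f := t)
        simpa using h
    _ = _ := by
        congr 2
        refine Finset.sum_congr rfl (fun j _ => ?_)
        exact Real.sq_sqrt (Finset.sum_nonneg fun a _ => sq_nonneg _)

noncomputable section

/-- Menshov–Rademacher inequality. -/
theorem stmt0 :
    ∃ C : ℝ, 0 < C ∧
      ∀ (n : ℕ) (φ : ℕ → ℝ → ℝ),
        (∀ k ∈ Finset.Icc 1 n, MemLp (φ k) 2 (volume.restrict (Set.Ioo (0:ℝ) 1))) →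
        (∀ j ∈ Finset.Icc 1 n, ∀ k ∈ Finset.Icc 1 n, j ≠ k →
          ∫ x in Set.Ioo (0:ℝ) 1, φ j x * φ k x = 0) →
        eLpNorm (fun x => ⨆ m ∈ Finset.Icc 1 n, |∑ k ∈ Finset.Icc 1 m, φ k x|) 2
            (volume.restrict (Set.Ioo (0:ℝ) 1)) ≤
          ENNReal.ofReal (C * Real.log (n + 1)) *
            eLpNorm (fun x => ∑ k ∈ Finset.Icc 1 n, φ k x) 2
              (volume.restrict (Set.Ioo (0:ℝ) 1)) := by
  refine ⟨3, by norm_num, ?_⟩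
  intro n φ hmem horth
  set μ := volume.restrict (Set.Ioo (0:ℝ) 1) with hμ
  have hIcc : ∀ r : ℕ, Finset.Icc 1 r = Finset.Ioc 0 r := by
    intro r; ext k; simp only [Finset.mem_Icc, Finset.mem_Ioc]; omega
  rcases Nat.eq_zero_or_pos n with hn0 | hn
  · subst hn0
    have hz : (fun x : ℝ => ⨆ m ∈ Finset.Icc 1 0, |∑ k ∈ Finset.Icc 1 m, φ k x|)
        = fun _ : ℝ => (0:ℝ) := by
      funext x
      refine le_antisymm ?_ (Real.iSup_nonneg fun m => Real.iSup_nonneg fun _ => abs_nonneg _)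
      refine Real.iSup_le (fun m => Real.iSup_le (fun hm => absurd hm (by simp)) le_rfl) le_rfl
    rw [hz]
    simp only [eLpNorm_zero']
    exact zero_le
  · set K := Nat.log 2 n + 1 with hKdef
    have hnK : n < 2^K := Nat.lt_pow_succ_log_self (by norm_num) n
    have hA_sub : ∀ j a : ℕ, Finset.Ioc (a*2^j) (min ((a+1)*2^j) n) ⊆ Finset.Icc 1 n := by
      intro j a k hk
      simp only [Finset.mem_Ioc] at hk
      simp only [Finset.mem_Icc]
      exact ⟨by omega, le_trans hk.2 (min_le_right _ _)⟩
    have hBmem : ∀ j a : ℕ,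
        MemLp (fun x => ∑ k ∈ Finset.Ioc (a*2^j) (min ((a+1)*2^j) n), φ k x) 2 μ :=
      fun j a => memLp_finset_sum _ (fun k hk => hmem k (hA_sub j a hk))
    set G : ℝ → ℝ := fun x => ∑ j ∈ Finset.range K, ∑ a ∈ Finset.range n,
      (∑ k ∈ Finset.Ioc (a*2^j) (min ((a+1)*2^j) n), φ k x)^2 with hGdef
    have hGnn : ∀ x, 0 ≤ G x :=
      fun x => Finset.sum_nonneg fun j _ => Finset.sum_nonneg fun a _ => sq_nonneg _
    have hGint : Integrable G μ :=
      integrable_finset_sum _ (fun j _ => integrable_finset_sum _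
        (fun a _ => (hBmem j a).integrable_sq))
    have hSint : ∀ s : Finset ℕ, s ⊆ Finset.Icc 1 n →
        ∫ x, (∑ k ∈ s, φ k x)^2 ∂μ = ∑ k ∈ s, ∫ x, (φ k x)^2 ∂μ := fun s hs =>
      MR_integral_sq_sum φ s (fun k hk => hmem k (hs hk))
        (fun j hj k hk hjk => horth j (hs hj) k (hs hk) hjk)
    set I := ∫ x, (∑ k ∈ Finset.Icc 1 n, φ k x)^2 ∂μ with hI
    have hGeq : ∫ x, G x ∂μ = (K:ℝ) * I := by
      have h1 : ∫ x, G x ∂μ = ∑ j ∈ Finset.range K, ∫ x, ∑ a ∈ Finset.range n,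
          (∑ k ∈ Finset.Ioc (a*2^j) (min ((a+1)*2^j) n), φ k x)^2 ∂μ :=
        integral_finset_sum _ (fun j _ => integrable_finset_sum _
          (fun a _ => (hBmem j a).integrable_sq))
      rw [h1]
      have hj : ∀ j ∈ Finset.range K, ∫ x, ∑ a ∈ Finset.range n,
          (∑ k ∈ Finset.Ioc (a*2^j) (min ((a+1)*2^j) n), φ k x)^2 ∂μ = I := by
        intro j _
        rw [integral_finset_sum _ (fun a _ => (hBmem j a).integrable_sq)]
        rw [Finset.sum_congr rfl (fun a _ => hSint _ (hA_sub j a))]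
        rw [← MR_partition j n (fun k => ∫ x, (φ k x)^2 ∂μ)]
        rw [hI, hIcc n, hSint _ (by rw [hIcc n])]
      rw [Finset.sum_congr rfl hj, Finset.sum_const, Finset.card_range, nsmul_eq_mul]
    set g : ℝ → ℝ := fun x => Real.sqrt ((K:ℝ) * G x) with hgdef
    have hpt : ∀ x, (⨆ m ∈ Finset.Icc 1 n, |∑ k ∈ Finset.Icc 1 m, φ k x|) ≤ g x := by
      intro x
      refine Real.iSup_le (fun m => Real.iSup_le (fun hm => ?_) (Real.sqrt_nonneg _))
        (Real.sqrt_nonneg _)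
      rw [hIcc m]
      exact MR_chain φ n K hn hnK x m (Finset.mem_Icc.mp hm).2
    have hMnn : ∀ x, 0 ≤ ⨆ m ∈ Finset.Icc 1 n, |∑ k ∈ Finset.Icc 1 m, φ k x| :=
      fun x => Real.iSup_nonneg fun m => Real.iSup_nonneg fun _ => abs_nonneg _
    have step1 : eLpNorm (fun x => ⨆ m ∈ Finset.Icc 1 n, |∑ k ∈ Finset.Icc 1 m, φ k x|) 2 μ
        ≤ eLpNorm g 2 μ :=
      eLpNorm_mono (fun x => by
        rw [Real.norm_eq_abs, Real.norm_eq_abs, abs_of_nonneg (hMnn x),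
          abs_of_nonneg (Real.sqrt_nonneg _)]
        exact hpt x)
    have hSn_int : Integrable (fun x => (∑ k ∈ Finset.Icc 1 n, φ k x)^2) μ :=
      (memLp_finset_sum _ (fun k hk => hmem k hk)).integrable_sq
    have hg_eq : eLpNorm g 2 μ
        = ENNReal.ofReal (K:ℝ) * eLpNorm (fun x => ∑ k ∈ Finset.Icc 1 n, φ k x) 2 μ := by
      rw [MR_eLpNorm_sq g, MR_eLpNorm_sq (fun x => ∑ k ∈ Finset.Icc 1 n, φ k x)]
      have h1 : ∀ x, g x ^2 = (K:ℝ) * G x :=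
        fun x => Real.sq_sqrt (mul_nonneg (Nat.cast_nonneg K) (hGnn x))
      simp_rw [h1]
      rw [← ofReal_integral_eq_lintegral_ofReal hSn_int (ae_of_all _ fun x => sq_nonneg _)]
      have h2 : ∫⁻ x, ENNReal.ofReal ((K:ℝ) * G x) ∂μ
          = ENNReal.ofReal ((K:ℝ)) * ENNReal.ofReal (∫ x, G x ∂μ) := by
        simp_rw [ENNReal.ofReal_mul (Nat.cast_nonneg K : (0:ℝ) ≤ (K:ℝ))]
        rw [lintegral_const_mul' _ _ ENNReal.ofReal_ne_top,
          ofReal_integral_eq_lintegral_ofReal hGint (ae_of_all _ hGnn)]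
      rw [h2, hGeq, ← hI]
      rw [ENNReal.ofReal_mul (Nat.cast_nonneg K : (0:ℝ) ≤ (K:ℝ))]
      rw [show ENNReal.ofReal (K:ℝ) * (ENNReal.ofReal (K:ℝ) * ENNReal.ofReal I)
          = (ENNReal.ofReal (K:ℝ))^2 * ENNReal.ofReal I by ring]
      rw [ENNReal.mul_rpow_of_nonneg _ _ (by norm_num : (0:ℝ) ≤ 1/2)]
      congr 1
      rw [← ENNReal.rpow_natCast (ENNReal.ofReal (K:ℝ)) 2, ← ENNReal.rpow_mul]
      norm_num
    have hK3 : (K:ℝ) ≤ 3 * Real.log ((n:ℝ)+1) := by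
      have hlog2 : (0.6931471803:ℝ) < Real.log 2 := Real.log_two_gt_d9
      have hD : (0:ℝ) < Real.log 2 := by linarith
      have hn1 : (1:ℝ) ≤ (n:ℝ) := by exact_mod_cast hn
      have h1 : (Nat.log 2 n : ℝ) ≤ Real.logb 2 n := Real.natLog_le_logb n 2
      have h2 : Real.logb 2 (n:ℝ) ≤ Real.logb 2 ((n:ℝ)+1) :=
        Real.logb_le_logb_of_le (by norm_num) (by linarith) (by linarith)
      have h3 : (1:ℝ) ≤ Real.logb 2 ((n:ℝ)+1) := by
        have h3' := Real.logb_le_logb_of_le (b := 2) (by norm_num)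
          (show (0:ℝ) < 2 by norm_num) (show (2:ℝ) ≤ (n:ℝ)+1 by linarith)
        rwa [Real.logb_self_eq_one (by norm_num)] at h3'
      have hK2 : (K:ℝ) ≤ 2 * Real.logb 2 ((n:ℝ)+1) := by
        rw [hKdef]; push_cast; linarith
      have hL : 0 ≤ Real.log ((n:ℝ)+1) := Real.log_nonneg (by linarith)
      have h4 : Real.log ((n:ℝ)+1) / Real.log 2 ≤ 1.5 * Real.log ((n:ℝ)+1) := by
        rw [div_le_iff₀ hD]; nlinarith
      have h5 : Real.logb 2 ((n:ℝ)+1) = Real.log ((n:ℝ)+1) / Real.log 2 := rfl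
      linarith [hK2, h4, h5 ▸ hK2]
    calc eLpNorm (fun x => ⨆ m ∈ Finset.Icc 1 n, |∑ k ∈ Finset.Icc 1 m, φ k x|) 2 μ
        ≤ eLpNorm g 2 μ := step1
      _ = ENNReal.ofReal (K:ℝ) * eLpNorm (fun x => ∑ k ∈ Finset.Icc 1 n, φ k x) 2 μ := hg_eq
      _ ≤ ENNReal.ofReal (3 * Real.log (n+1))
            * eLpNorm (fun x => ∑ k ∈ Finset.Icc 1 n, φ k x) 2 μ :=
          mul_le_mul_left (ENNReal.ofReal_le_ofReal hK3) _
end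
end

section
/- Let $0<\delta<1$ and suppose $(\phi_k)$ is a wavelet-type system: an orthonormal system on $[0,1]$ with $\int_0^1 \phi_k = 0$ and $|\phi_k(x)| \le c\,2^{m/2}(1+2^m|x-t_k|)^{-(1+\delta)}$ for $2^{m-1}<k\le 2^m$. For an interval $I=[a,b)\subset[0,1)$, let $\Delta\Phi_m(\mathbf{1}_I)(x) = \sum_{2^{m-1}<k\le 2^m} \langle \mathbf{1}_I, \phi_k\rangle\, \phi_k(x)$. Then for all $x \in [0,1)$, $|\Delta\Phi_m(\mathbf{1}_I)(x)| \le C\left( (1+2^m|x-a|)^{-\delta} + (1+2^m|x-b|)^{-\delta} \right)$, with $C$ depending only on $c$ and $\delta$. -/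
open MeasureTheory Set

noncomputable section

/-- The decay profile `ξ(x) = (1+|x|)^{-(1+δ)}`. -/
def xi (δ x : ℝ) : ℝ := (1 + |x|) ^ (-(1 + δ))

/-- The center `t_k = (2j-1)/2^m` for `k = 2^{m-1} + j`, `1 ≤ j ≤ 2^{m-1}`. -/
def tpt (m k : ℕ) : ℝ := (2 * ((k : ℝ) - 2 ^ (m - 1)) - 1) / 2 ^ m

/-- Decay bound of a wavelet-type system: for `2^{m-1} < k ≤ 2^m`,
`|φ_k(x)| ≤ c 2^{m/2} ξ(2^m (x - t_k))`. -/
def WaveletDecay (δ c : ℝ) (φ : ℕ → ℝ → ℝ) : Prop :=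
  ∀ m : ℕ, 1 ≤ m → ∀ k ∈ Finset.Ioc (2 ^ (m - 1)) (2 ^ m), ∀ x ∈ Set.Icc (0:ℝ) 1,
    |φ k x| ≤ c * 2 ^ ((m : ℝ) / 2) * xi δ (2 ^ m * (x - tpt m k))

/-- Hölder bound of a wavelet-type system: for `2^{m-1} < k ≤ 2^m` and
`|t - t'| ≤ 2^{-m}`, `|φ_k(t) - φ_k(t')| ≤ c 2^{m/2} (2^m |t-t'|)^α ξ(2^m (t - t_k))`. -/
def WaveletHolder (δ α c : ℝ) (φ : ℕ → ℝ → ℝ) : Prop :=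
  ∀ m : ℕ, 1 ≤ m → ∀ k ∈ Finset.Ioc (2 ^ (m - 1)) (2 ^ m),
    ∀ t ∈ Set.Icc (0:ℝ) 1, ∀ t' ∈ Set.Icc (0:ℝ) 1, |t - t'| ≤ ((2 : ℝ) ^ m)⁻¹ →
      |φ k t - φ k t'| ≤
        c * 2 ^ ((m : ℝ) / 2) * (2 ^ m * |t - t'|) ^ α * xi δ (2 ^ m * (t - tpt m k))

/-- A wavelet-type system: measurable, orthonormal on `(0,1)`, mean zero, with the
decay and Hölder bounds. -/
def IsWaveletSystem (δ α c : ℝ) (φ : ℕ → ℝ → ℝ) : Prop :=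
  (∀ k, Measurable (φ k)) ∧
  (∀ j k : ℕ, 1 ≤ j → 1 ≤ k →
    (∫ x in Set.Ioo (0:ℝ) 1, φ j x * φ k x) = if j = k then 1 else 0) ∧
  (∀ k : ℕ, 1 ≤ k → (∫ x in Set.Ioo (0:ℝ) 1, φ k x) = 0) ∧
  WaveletDecay δ c φ ∧ WaveletHolder δ α c φ

def xid (δ x : ℝ) : ℝ := (1 + |x|) ^ (-δ)

lemma one_add_abs_pos (x : ℝ) : (0:ℝ) < 1 + |x| := by positivity

lemma xi_nonneg (δ x : ℝ) : 0 ≤ xi δ x := Real.rpow_nonneg (one_add_abs_pos x).le _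

lemma xid_nonneg (δ x : ℝ) : 0 ≤ xid δ x := Real.rpow_nonneg (one_add_abs_pos x).le _

lemma rpow_neg_anti {x y e : ℝ} (hx : 0 < x) (hxy : x ≤ y) (he : 0 ≤ e) :
    y ^ (-e) ≤ x ^ (-e) := by
  rw [Real.rpow_neg (hx.trans_le hxy).le, Real.rpow_neg hx.le]
  have h1 : 0 < x ^ e := Real.rpow_pos_of_pos hx e
  have h2 : x ^ e ≤ y ^ e := Real.rpow_le_rpow hx.le hxy he
  exact inv_anti₀ h1 h2

lemma xi_le_one {δ : ℝ} (hδ : 0 ≤ δ) (x : ℝ) : xi δ x ≤ 1 := by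
  have := rpow_neg_anti one_pos (by simpa using abs_nonneg x : (1:ℝ) ≤ 1 + |x|)
    (by linarith : (0:ℝ) ≤ 1 + δ)
  simpa [xi, Real.one_rpow] using this

lemma xid_le_one {δ : ℝ} (hδ : 0 ≤ δ) (x : ℝ) : xid δ x ≤ 1 := by
  have := rpow_neg_anti one_pos (by simpa using abs_nonneg x : (1:ℝ) ≤ 1 + |x|) hδ
  simpa [xid, Real.one_rpow] using this

lemma xi_even (δ x : ℝ) : xi δ (-x) = xi δ x := by simp [xi]

/-- Tail integral bound over `Ioi a` when the center `T` is left of `a`. -/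
lemma tail_Ioi {δ p T a : ℝ} (hδ0 : 0 < δ) (hp : 0 < p) (hTa : T ≤ a) :
    IntegrableOn (fun t => xi δ (p * (t - T))) (Ioi a) volume ∧
    ∫ t in Ioi a, xi δ (p * (t - T)) ≤ 1 / (δ * p) * xid δ (p * (a - T)) := by
  have hbase : ∀ t : ℝ, a ≤ t → (0:ℝ) < 1 + p * (t - T) := by
    intro t ht; nlinarith
  set g : ℝ → ℝ := fun t => -(1 / (δ * p)) * (1 + p * (t - T)) ^ (-δ) with hgdef
  have hderiv : ∀ t ∈ Ici a, HasDerivAt g ((1 + p * (t - T)) ^ (-(1 + δ))) t := by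
    intro t ht
    have h1 : HasDerivAt (fun s : ℝ => 1 + p * (s - T)) p t := by
      simpa using (((hasDerivAt_id t).sub_const T).const_mul p).const_add 1
    have h2 := (Real.hasDerivAt_rpow_const (x := 1 + p * (t - T)) (p := -δ)
      (Or.inl (hbase t ht).ne')).comp t h1
    have h3 := h2.const_mul (-(1 / (δ * p)))
    refine h3.congr_deriv ?_
    have he : -δ - 1 = -(1 + δ) := by ring
    have hδ' := hδ0.ne'
    have hp' := hp.ne'
    rw [← he]
    field_simp
  have htend : Filter.Tendsto g Filter.atTop (nhds 0) := by
    have h1 : Filter.Tendsto (fun t : ℝ => 1 + p * (t - T)) Filter.atTop Filter.atTop := by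
      apply Filter.tendsto_atTop_add_const_left
      exact (Filter.tendsto_atTop_add_const_right _ (-T) Filter.tendsto_id).const_mul_atTop hp
    have h2 := (tendsto_rpow_neg_atTop hδ0).comp h1
    have h3 := h2.const_mul (-(1 / (δ * p)))
    simpa [hgdef, Function.comp_def] using h3
  have hnn : ∀ t ∈ Ioi a, (0:ℝ) ≤ (1 + p * (t - T)) ^ (-(1 + δ)) :=
    fun t ht => Real.rpow_nonneg (hbase t (le_of_lt ht)).le _
  have hint : IntegrableOn (fun t => (1 + p * (t - T)) ^ (-(1 + δ))) (Ioi a) volume :=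
    integrableOn_Ioi_deriv_of_nonneg' hderiv hnn htend
  have heqfun : ∀ t ∈ Ioi a, xi δ (p * (t - T)) = (1 + p * (t - T)) ^ (-(1 + δ)) := by
    intro t ht
    have : (0:ℝ) ≤ p * (t - T) := by nlinarith [le_of_lt (show a < t from ht)]
    simp [xi, abs_of_nonneg this]
  constructor
  · exact hint.congr_fun (fun t ht => (heqfun t ht).symm) measurableSet_Ioi
  · have hval : ∫ t in Ioi a, (1 + p * (t - T)) ^ (-(1 + δ)) = 0 - g a :=
      integral_Ioi_of_hasDerivAt_of_nonneg' hderiv hnn htend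
    have h0 : ∫ t in Ioi a, xi δ (p * (t - T)) = ∫ t in Ioi a, (1 + p * (t - T)) ^ (-(1 + δ)) :=
      setIntegral_congr_fun measurableSet_Ioi heqfun
    rw [h0, hval]
    have habs : |p * (a - T)| = p * (a - T) := abs_of_nonneg (by nlinarith)
    have : (0:ℝ) - g a = 1 / (δ * p) * (1 + p * (a - T)) ^ (-δ) := by
      simp [hgdef]
    rw [this, xid, habs]

lemma tail_Iic {δ p T b : ℝ} (hδ0 : 0 < δ) (hp : 0 < p) (hbT : b ≤ T) :
    IntegrableOn (fun t => xi δ (p * (t - T))) (Iic b) volume ∧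
    ∫ t in Iic b, xi δ (p * (t - T)) ≤ 1 / (δ * p) * xid δ (p * (b - T)) := by
  have h := tail_Ioi (δ := δ) (p := p) (T := -T) (a := -b) hδ0 hp (by linarith)
  have hfun : ∀ t : ℝ, xi δ (p * (t - T)) = (fun y => xi δ (p * (y - -T))) (-t) := by
    intro t
    have : p * (-t - -T) = -(p * (t - T)) := by ring
    simp only [this, xi, abs_neg]
  have hiic : (fun t => xi δ (p * (t - T))) = (fun y => xi δ (p * (y - -T))) ∘ (fun t : ℝ => -t) := by
    funext t; exact hfun t
  constructor
  · have m : MeasurableEmbedding fun x : ℝ => -x :=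
      (Homeomorph.neg ℝ).isClosedEmbedding.measurableEmbedding
    have h1 : IntegrableOn (fun y => xi δ (p * (y - -T))) (Ioi (-b))
        (Measure.map (fun x : ℝ => -x) volume) := by
      rw [Measure.map_neg_eq_self (volume : Measure ℝ)]; exact h.1
    have h2 := (m.integrableOn_map_iff).mp h1
    rw [hiic]
    have : (fun x : ℝ => -x) ⁻¹' Ioi (-b) = Iio b := by
      ext t; simp [neg_lt]
    rwa [this, ← integrableOn_Iic_iff_integrableOn_Iio] at h2
  · have h1 : ∫ t in Iic b, xi δ (p * (t - T)) =
        ∫ t in Iic b, (fun y => xi δ (p * (y - -T))) (-t) := by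
      refine setIntegral_congr_fun measurableSet_Iic (fun t _ => hfun t)
    have h2' := integral_comp_neg_Iic b (fun y => xi δ (p * (y - -T)))
    rw [h1, h2']
    have h2 := h.2
    have : p * (-b - -T) = -(p * (b - T)) := by ring
    rw [this] at h2
    simpa [xid, xi, abs_neg] using h2

/-- Main coefficient bound. -/
lemma coef_bound {δ : ℝ} (hδ0 : 0 < δ) {f : ℝ → ℝ} (hmf : Measurable f)
    {p T M : ℝ} (hp : 0 < p) (hM : 0 ≤ M)
    (hbd : ∀ t ∈ Icc (0:ℝ) 1, |f t| ≤ M * xi δ (p * (t - T)))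
    (hmean : (∫ t in Ioo (0:ℝ) 1, f t) = 0)
    {a b : ℝ} (h0a : 0 ≤ a) (hab : a < b) (hb1 : b ≤ 1) :
    |∫ t in Ioo a b, f t| ≤
      M / (δ * p) * (xid δ (p * (a - T)) + xid δ (p * (b - T))) := by
  set B : ℝ → ℝ := fun t => M * xi δ (p * (t - T)) with hBdef
  have hBnn : ∀ t, 0 ≤ B t := fun t => mul_nonneg hM (xi_nonneg _ _)
  have hBcont : Continuous B := by
    apply continuous_const.mul
    apply Continuous.rpow_const
    · exact continuous_const.add ((continuous_const.mul
        ((continuous_id.sub continuous_const))).abs)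
    · intro x; left; positivity
  -- integrability of f on subintervals of (0,1)
  have hfint : ∀ s : Set ℝ, s ⊆ Icc 0 1 → MeasurableSet s → IntegrableOn f s volume := by
    intro s hs hms
    apply Integrable.mono' (g := fun _ => M)
    · refine (integrableOn_const_iff).mpr (Or.inr (lt_of_le_of_lt (measure_mono hs) ?_))
      rw [Real.volume_Icc]; exact ENNReal.ofReal_lt_top
    · exact (hmf.aestronglyMeasurable).restrict
    · filter_upwards [ae_restrict_mem hms] with t ht
      calc ‖f t‖ = |f t| := rfl
        _ ≤ M * xi δ (p * (t - T)) := hbd t (hs ht)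
        _ ≤ M * 1 := by
            have := xi_le_one hδ0.le (p * (t - T))
            exact mul_le_mul_of_nonneg_left this hM
        _ = M := mul_one M
  have habs : ∀ s : Set ℝ, s ⊆ Icc 0 1 → MeasurableSet s → IntegrableOn B s volume →
      |∫ t in s, f t| ≤ ∫ t in s, B t := by
    intro s hs hms hBint
    calc |∫ t in s, f t| ≤ ∫ t in s, |f t| := by
          simpa using norm_integral_le_integral_norm (μ := volume.restrict s) f
      _ ≤ ∫ t in s, B t := by
          refine setIntegral_mono_on ((hfint s hs hms).abs) hBint hms (fun t ht => hbd t (hs ht))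
  have key_Ioi : ∀ a' : ℝ, T ≤ a' → IntegrableOn B (Ioi a') volume ∧
      ∫ t in Ioi a', B t ≤ M / (δ * p) * xid δ (p * (a' - T)) := by
    intro a' ha'
    obtain ⟨hi, hv⟩ := tail_Ioi (δ := δ) (p := p) (T := T) (a := a') hδ0 hp ha'
    refine ⟨hi.const_mul M, ?_⟩
    rw [integral_const_mul]
    calc M * ∫ t in Ioi a', xi δ (p * (t - T)) ≤ M * (1 / (δ * p) * xid δ (p * (a' - T))) :=
          mul_le_mul_of_nonneg_left hv hM
      _ = M / (δ * p) * xid δ (p * (a' - T)) := by ring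
  have key_Iic : ∀ b' : ℝ, b' ≤ T → IntegrableOn B (Iic b') volume ∧
      ∫ t in Iic b', B t ≤ M / (δ * p) * xid δ (p * (b' - T)) := by
    intro b' hb'
    obtain ⟨hi, hv⟩ := tail_Iic (δ := δ) (p := p) (T := T) (b := b') hδ0 hp hb'
    refine ⟨hi.const_mul M, ?_⟩
    rw [integral_const_mul]
    calc M * ∫ t in Iic b', xi δ (p * (t - T)) ≤ M * (1 / (δ * p) * xid δ (p * (b' - T))) :=
          mul_le_mul_of_nonneg_left hv hM
      _ = M / (δ * p) * xid δ (p * (b' - T)) := by ring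
  have hsub : Ioo a b ⊆ Icc (0:ℝ) 1 := fun t ht => ⟨le_trans h0a ht.1.le, le_trans ht.2.le hb1⟩
  have hxid_nn : ∀ z : ℝ, (0:ℝ) ≤ xid δ z := fun z => xid_nonneg δ z
  have hMδp : 0 ≤ M / (δ * p) := by positivity
  rcases le_or_gt T a with hTa | haT
  · -- T left of a : integrate tail over Ioi a
    obtain ⟨hi, hv⟩ := key_Ioi a hTa
    calc |∫ t in Ioo a b, f t| ≤ ∫ t in Ioo a b, B t :=
          habs _ hsub measurableSet_Ioo (hi.mono_set Ioo_subset_Ioi_self)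
      _ ≤ ∫ t in Ioi a, B t := by
          refine setIntegral_mono_set hi ?_ (HasSubset.Subset.eventuallyLE Ioo_subset_Ioi_self)
          exact Filter.Eventually.of_forall hBnn
      _ ≤ M / (δ * p) * xid δ (p * (a - T)) := hv
      _ ≤ M / (δ * p) * (xid δ (p * (a - T)) + xid δ (p * (b - T))) := by
          have := hxid_nn (p * (b - T)); nlinarith
  rcases le_or_gt b T with hbT | hTb
  · -- T right of b
    obtain ⟨hi, hv⟩ := key_Iic b hbT
    calc |∫ t in Ioo a b, f t| ≤ ∫ t in Ioo a b, B t :=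
          habs _ hsub measurableSet_Ioo (hi.mono_set (Ioo_subset_Iio_self.trans Iio_subset_Iic_self))
      _ ≤ ∫ t in Iic b, B t := by
          refine setIntegral_mono_set hi (Filter.Eventually.of_forall hBnn)
            (HasSubset.Subset.eventuallyLE (Ioo_subset_Iio_self.trans Iio_subset_Iic_self))
      _ ≤ M / (δ * p) * xid δ (p * (b - T)) := hv
      _ ≤ M / (δ * p) * (xid δ (p * (a - T)) + xid δ (p * (b - T))) := by
          have := hxid_nn (p * (a - T)); nlinarith
  · -- a < T < b : use mean zero
    obtain ⟨hiA, hvA⟩ := key_Iic a haT.le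
    obtain ⟨hiB, hvB⟩ := key_Ioi b hTb.le
    have hdiff : ∫ t in Ioo (0:ℝ) 1 \ Ioo a b, f t =
        (∫ t in Ioo (0:ℝ) 1, f t) - ∫ t in Ioo a b, f t :=
      integral_diff measurableSet_Ioo (hfint _ Ioo_subset_Icc_self measurableSet_Ioo)
        (Ioo_subset_Ioo h0a hb1)
    have heq : |∫ t in Ioo a b, f t| = |∫ t in Ioo (0:ℝ) 1 \ Ioo a b, f t| := by
      rw [hdiff, hmean]; rw [abs_sub_comm]; simp
    have hDsub : Ioo (0:ℝ) 1 \ Ioo a b ⊆ Iic a ∪ Ici b := by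
      intro t ht
      rcases le_or_gt t a with h | h
      · exact Or.inl h
      rcases lt_or_ge t b with h2 | h2
      · exact absurd ⟨h, h2⟩ ht.2
      · exact Or.inr h2
    have hiB' : IntegrableOn B (Ici b) volume :=
      (integrableOn_Ici_iff_integrableOn_Ioi).mpr hiB
    have hUint : IntegrableOn B (Iic a ∪ Ici b) volume := hiA.union hiB'
    have hdisj : Disjoint (Iic a) (Ici b) := Iic_disjoint_Ici.mpr (not_le.mpr hab)
    calc |∫ t in Ioo a b, f t| = |∫ t in Ioo (0:ℝ) 1 \ Ioo a b, f t| := heq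
      _ ≤ ∫ t in Ioo (0:ℝ) 1 \ Ioo a b, B t :=
          habs _ ((diff_subset).trans Ioo_subset_Icc_self)
            (measurableSet_Ioo.diff measurableSet_Ioo) (hUint.mono_set hDsub)
      _ ≤ ∫ t in Iic a ∪ Ici b, B t := by
          refine setIntegral_mono_set hUint (Filter.Eventually.of_forall hBnn)
            (HasSubset.Subset.eventuallyLE hDsub)
      _ = (∫ t in Iic a, B t) + ∫ t in Ici b, B t :=
          setIntegral_union hdisj measurableSet_Ici hiA hiB'
      _ ≤ M / (δ * p) * xid δ (p * (a - T)) + M / (δ * p) * xid δ (p * (b - T)) := by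
          have h3 : ∫ t in Ici b, B t = ∫ t in Ioi b, B t := integral_Ici_eq_integral_Ioi
          rw [h3]
          exact add_le_add hvA hvB
      _ = M / (δ * p) * (xid δ (p * (a - T)) + xid δ (p * (b - T))) := by ring

/-- p-series partial sum bound. -/
lemma psum {δ : ℝ} (hδ0 : 0 < δ) (M : ℕ) :
    ∑ d ∈ Finset.Icc 1 M, ((d : ℝ)) ^ (-(1 + δ)) ≤ 1 + 1 / δ := by
  rcases Nat.eq_zero_or_pos M with rfl | hM
  · simp; positivity
  obtain ⟨N, rfl⟩ : ∃ N, M = N + 1 := ⟨M - 1, by omega⟩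
  have hsplit : ∑ d ∈ Finset.Icc 1 (N + 1), ((d : ℝ)) ^ (-(1 + δ)) =
      (∑ i ∈ Finset.range N, ((1:ℝ) + (↑(i + 1) : ℕ)) ^ (-(1 + δ))) + 1 := by
    have h1 : Finset.Icc 1 (N + 1) = Finset.Ico 1 (N + 2) := by
      ext d; simp [Finset.mem_Icc, Finset.mem_Ico]; omega
    rw [h1, Finset.sum_Ico_eq_sum_range]
    have h2 : N + 2 - 1 = N + 1 := by omega
    rw [h2, Finset.sum_range_succ']
    congr 1
    · apply Finset.sum_congr rfl
      intro i _
      congr 1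
      push_cast; ring
    · norm_num
  rw [hsplit]
  have hanti : AntitoneOn (fun x : ℝ => x ^ (-(1 + δ))) (Icc (1:ℝ) (1 + (N:ℕ))) := by
    intro s hs t ht hst
    exact rpow_neg_anti (lt_of_lt_of_le zero_lt_one hs.1) hst (by linarith)
  have hcomp := hanti.sum_le_integral
  have hN1 : (1:ℝ) ≤ 1 + (N:ℝ) := by linarith [Nat.cast_nonneg (α := ℝ) N]
  have hint : ∫ x in (1:ℝ)..(1 + (N:ℕ)), x ^ (-(1 + δ)) ≤ 1 / δ := by
    rw [integral_rpow (Or.inr ⟨by intro h; nlinarith, by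
        rw [Set.uIcc_of_le (by push_cast; linarith)]
        intro h
        have := h.1; norm_num at this⟩)]
    have hne : -(1 + δ) + 1 = -δ := by ring
    rw [hne, Real.one_rpow]
    have hvv : (0:ℝ) ≤ ((1:ℝ) + (N:ℕ)) ^ (-δ) := Real.rpow_nonneg (by push_cast; linarith) _
    have hr : (((1:ℝ) + (N:ℕ)) ^ (-δ) - 1) / (-δ) = (1 - ((1:ℝ) + (N:ℕ)) ^ (-δ)) / δ := by
      ring
    rw [hr]
    gcongr
    linarith
  have := le_trans hcomp hint
  linarith

/-- Fiber-counting sum bound. -/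
lemma count_sum {g : ℕ → ℝ} (hg : ∀ d, 0 ≤ g d) (s : Finset ℕ) (ψ : ℕ → ℕ)
    (hψ : ∀ d, (s.filter (fun j => ψ j = d)).card ≤ 2) (M : ℕ) (hM : ∀ j ∈ s, ψ j ≤ M) :
    ∑ j ∈ s, g (ψ j) ≤ 2 * ∑ d ∈ Finset.range (M + 1), g d := by
  have hmaps : ∀ j ∈ s, ψ j ∈ Finset.range (M + 1) :=
    fun j hj => Finset.mem_range.mpr (Nat.lt_succ_of_le (hM j hj))
  rw [← Finset.sum_fiberwise_of_maps_to hmaps (fun j => g (ψ j))]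
  rw [Finset.mul_sum]
  apply Finset.sum_le_sum
  intro d _
  have : ∑ j ∈ s.filter (fun j => ψ j = d), g (ψ j) =
      ∑ j ∈ s.filter (fun j => ψ j = d), g d := by
    apply Finset.sum_congr rfl
    intro j hj
    rw [(Finset.mem_filter.mp hj).2]
  rw [this, Finset.sum_const, nsmul_eq_mul]
  have := hψ d
  have h2 : ((s.filter (fun j => ψ j = d)).card : ℝ) ≤ 2 := by exact_mod_cast this
  nlinarith [hg d]

/-- Grid sum bound: sum of `xi` over integer-translates grid. -/
lemma grid_sum {δ : ℝ} (hδ0 : 0 < δ) (θ : ℝ) (s : Finset ℕ) :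
    ∑ k ∈ s, xi δ (2 * (θ - (k : ℝ))) ≤ 4 + 2 / δ := by
  set n : ℤ := round θ with hn
  set ψ : ℕ → ℕ := fun j => (n - (j : ℤ)).natAbs with hψdef
  set g : ℕ → ℝ := fun d => (max 1 (2 * (d : ℝ))) ^ (-(1 + δ)) with hgdef
  have hg0 : ∀ d, 0 ≤ g d := fun d => Real.rpow_nonneg (le_trans zero_le_one (le_max_left _ _)) _
  have hkey : ∀ j : ℕ, xi δ (2 * (θ - (j : ℝ))) ≤ g (ψ j) := by
    intro j
    have h1 : |2 * (θ - (j : ℝ))| = 2 * |θ - (j : ℝ)| := by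
      rw [abs_mul]; norm_num
    have hround : |θ - (n : ℝ)| ≤ 1 / 2 := by
      simpa [hn] using abs_sub_round θ
    have hcast : ((ψ j : ℤ) : ℝ) = |(n : ℝ) - (j : ℝ)| := by
      rw [hψdef]
      push_cast [Nat.cast_natAbs]
      norm_num
    have h2 : max 1 (2 * (ψ j : ℝ)) ≤ 1 + |2 * (θ - (j : ℝ))| := by
      rw [h1]
      apply max_le
      · nlinarith [abs_nonneg (θ - (j:ℝ))]
      · have : |(n:ℝ) - (j:ℝ)| ≤ |(n:ℝ) - θ| + |θ - (j:ℝ)| := abs_sub_le _ _ _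
        have h3 : |(n:ℝ) - θ| = |θ - (n:ℝ)| := abs_sub_comm _ _
        have h4 : (2 * (ψ j : ℝ)) = 2 * |(n:ℝ) - (j:ℝ)| := by
          rw [← hcast]; push_cast; ring
        rw [h4]
        nlinarith
    have h5 : (0:ℝ) < max 1 (2 * (ψ j : ℝ)) := lt_of_lt_of_le zero_lt_one (le_max_left _ _)
    exact rpow_neg_anti h5 h2 (by linarith)
  have hfiber : ∀ d, (s.filter (fun j => ψ j = d)).card ≤ 2 := by
    intro d
    have hsub : s.filter (fun j => ψ j = d) ⊆ {(n - d).toNat, (n + d).toNat} := by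
      intro j hj
      have hd := (Finset.mem_filter.mp hj).2
      have := Int.natAbs_eq_iff.mp hd
      rcases this with h | h
      · have : (j : ℤ) = n - d := by omega
        have : j = (n - d).toNat := by omega
        simp [this]
      · have : (j : ℤ) = n + d := by push_cast at h ⊢; omega
        have : j = (n + d).toNat := by omega
        simp [this]
    calc (s.filter (fun j => ψ j = d)).card ≤ ({(n - d).toNat, (n + d).toNat} : Finset ℕ).card :=
          Finset.card_le_card hsub
      _ ≤ 2 := Finset.card_insert_le _ _ |>.trans (by simp)
  set M : ℕ := s.sup ψ with hM
  have hMb : ∀ j ∈ s, ψ j ≤ M := fun j hj => Finset.le_sup hj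
  have hstep : ∑ k ∈ s, xi δ (2 * (θ - (k : ℝ))) ≤ 2 * ∑ d ∈ Finset.range (M + 1), g d := by
    calc ∑ k ∈ s, xi δ (2 * (θ - (k : ℝ))) ≤ ∑ k ∈ s, g (ψ k) :=
          Finset.sum_le_sum (fun k _ => hkey k)
      _ ≤ 2 * ∑ d ∈ Finset.range (M + 1), g d := count_sum hg0 s ψ hfiber M hMb
  have hgsum : ∑ d ∈ Finset.range (M + 1), g d ≤ 2 + 1 / δ := by
    rw [Finset.sum_range_succ']
    have hg0' : g 0 = 1 := by simp [hgdef]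
    rw [hg0']
    have hterm : ∀ i : ℕ, g (i + 1) ≤ ((i + 1 : ℕ) : ℝ) ^ (-(1 + δ)) := by
      intro i
      have h1 : max 1 (2 * ((i + 1 : ℕ) : ℝ)) = 2 * ((i + 1 : ℕ) : ℝ) := by
        apply max_eq_right
        push_cast
        nlinarith [Nat.cast_nonneg (α := ℝ) i]
      rw [hgdef]
      simp only [h1]
      apply rpow_neg_anti (by push_cast; nlinarith [Nat.cast_nonneg (α := ℝ) i])
        (by nlinarith [Nat.cast_nonneg (α := ℝ) i]) (by linarith)
    have hsum2 : ∑ i ∈ Finset.range M, g (i + 1) ≤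
        ∑ i ∈ Finset.range M, ((i + 1 : ℕ) : ℝ) ^ (-(1 + δ)) :=
      Finset.sum_le_sum (fun i _ => hterm i)
    have hre : ∑ i ∈ Finset.range M, ((i + 1 : ℕ) : ℝ) ^ (-(1 + δ)) =
        ∑ d ∈ Finset.Icc 1 M, ((d : ℝ)) ^ (-(1 + δ)) := by
      have h1 : Finset.Icc 1 M = Finset.Ico 1 (M + 1) := by
        ext d; simp [Finset.mem_Icc, Finset.mem_Ico]
      rw [h1, Finset.sum_Ico_eq_sum_range]
      have h2 : M + 1 - 1 = M := by omega
      rw [h2]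
      apply Finset.sum_congr rfl
      intro i _
      congr 2
      omega
    have := psum hδ0 M
    linarith
  have hfin : (2:ℝ) * (2 + 1/δ) = 4 + 2/δ := by ring
  nlinarith

lemma xi_split (δ z : ℝ) : xi δ z = xid δ z * (1 + |z|)⁻¹ := by
  have h : (0:ℝ) < 1 + |z| := by positivity
  rw [xi, xid, show -(1 + δ) = -δ + -1 by ring, Real.rpow_add h, Real.rpow_neg_one]

/-- Pointwise product estimate. -/
lemma prod_bound {δ : ℝ} (hδ0 : 0 < δ) (hδ1 : δ ≤ 1) (P Q u : ℝ) :
    xi δ (P - u) * xid δ (Q - u) ≤ 2 * xid δ (P - Q) * (xi δ (P - u) + xi δ (Q - u)) := by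
  set D : ℝ := |P - Q| with hD
  have hD0 : 0 ≤ D := abs_nonneg _
  have htri : D ≤ |P - u| + |Q - u| := by
    calc D = |(P - u) - (Q - u)| := by rw [hD]; ring_nf
      _ ≤ |P - u| + |Q - u| := abs_sub _ _
  have half : ∀ w : ℝ, 0 ≤ w → D ≤ 2 * w → (1 + w) ^ (-δ) ≤ 2 * xid δ (P - Q) := by
    intro w hw hDw
    have h0 : (0:ℝ) < (1 + D) / 2 := by linarith
    have h1 : (1 + D) / 2 ≤ 1 + w := by linarith
    have e1 : ((1 + D) / 2 : ℝ) ^ (-δ) = (1 + D) ^ (-δ) * 2 ^ δ := by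
      rw [Real.div_rpow (by linarith) (by norm_num : (0:ℝ) ≤ 2),
        Real.rpow_neg (by norm_num : (0:ℝ) ≤ 2), div_inv_eq_mul]
    have e2 : (2:ℝ) ^ δ ≤ 2 := by
      calc (2:ℝ) ^ δ ≤ (2:ℝ) ^ (1:ℝ) :=
            Real.rpow_le_rpow_of_exponent_le (by norm_num) hδ1
        _ = 2 := Real.rpow_one 2
    calc (1 + w) ^ (-δ) ≤ ((1 + D) / 2) ^ (-δ) := rpow_neg_anti h0 h1 hδ0.le
      _ = (1 + D) ^ (-δ) * 2 ^ δ := e1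
      _ ≤ (1 + D) ^ (-δ) * 2 := by
          have := Real.rpow_nonneg (by linarith : (0:ℝ) ≤ 1 + D) (-δ)
          nlinarith
      _ = 2 * xid δ (P - Q) := by rw [xid, ← hD]; ring
  rcases le_total |P - u| |Q - u| with hle | hle
  · -- |P-u| ≤ |Q-u| : Q-side is far
    have h1 : xid δ (Q - u) ≤ 2 * xid δ (P - Q) := by
      rw [xid]
      exact half |Q - u| (abs_nonneg _) (by linarith)
    calc xi δ (P - u) * xid δ (Q - u) ≤ xi δ (P - u) * (2 * xid δ (P - Q)) :=
          mul_le_mul_of_nonneg_left h1 (xi_nonneg _ _)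
      _ = 2 * xid δ (P - Q) * xi δ (P - u) := by ring
      _ ≤ 2 * xid δ (P - Q) * (xi δ (P - u) + xi δ (Q - u)) := by
          have h2 := xi_nonneg δ (Q - u)
          have h3 := xid_nonneg δ (P - Q)
          nlinarith
  · -- |Q-u| ≤ |P-u| : P-side is far
    have h1 : xid δ (P - u) ≤ 2 * xid δ (P - Q) := by
      rw [xid]
      exact half |P - u| (abs_nonneg _) (by linarith)
    have h2 : (1 + |P - u|)⁻¹ ≤ (1 + |Q - u|)⁻¹ := by
      have hq : (0:ℝ) < 1 + |Q - u| := by positivity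
      exact inv_anti₀ hq (by linarith)
    calc xi δ (P - u) * xid δ (Q - u)
        = (xid δ (P - u) * (1 + |P - u|)⁻¹) * xid δ (Q - u) := by rw [xi_split]
      _ ≤ (2 * xid δ (P - Q) * (1 + |Q - u|)⁻¹) * xid δ (Q - u) := by
          apply mul_le_mul_of_nonneg_right _ (xid_nonneg _ _)
          have hb : (0:ℝ) ≤ 2 * xid δ (P - Q) := by have := xid_nonneg δ (P - Q); linarith
          apply mul_le_mul h1 h2 (by positivity) hb
      _ = 2 * xid δ (P - Q) * xi δ (Q - u) := by rw [xi_split]; ring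
      _ ≤ 2 * xid δ (P - Q) * (xi δ (P - u) + xi δ (Q - u)) := by
          have h3 := xi_nonneg δ (P - u)
          have h4 := xid_nonneg δ (P - Q)
          nlinarith

/-- Decay estimate for a wavelet block applied to an indicator of an interval. -/
theorem stmt6 (δ c : ℝ) (hδ0 : 0 < δ) (hδ1 : δ < 1) (hc : 0 < c) :
    ∃ C : ℝ, 0 < C ∧
      ∀ α : ℝ, 0 < α → α ≤ 1 →
        ∀ φ : ℕ → ℝ → ℝ, IsWaveletSystem δ α c φ →
          ∀ m : ℕ, 1 ≤ m → ∀ a b : ℝ, 0 ≤ a → a < b → b ≤ 1 →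
            ∀ x ∈ Set.Ico (0:ℝ) 1,
              |∑ k ∈ Finset.Ioc (2 ^ (m - 1)) (2 ^ m),
                  (∫ t in Set.Ioo a b, φ k t) * φ k x| ≤
                C * ((1 + 2 ^ m * |x - a|) ^ (-δ) + (1 + 2 ^ m * |x - b|) ^ (-δ)) := by
  refine ⟨4 * (4 + 2 / δ) * c ^ 2 / δ, by positivity, ?_⟩
  intro α hα0 hα1 φ hsys m hm a b h0a hab hb1 x hx
  obtain ⟨hmeas, -, hmean, hdecay, -⟩ := hsys
  have hp : (0:ℝ) < 2 ^ m := by positivity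
  have hxIcc : x ∈ Icc (0:ℝ) 1 := ⟨hx.1, hx.2.le⟩
  set blk := Finset.Ioc (2 ^ (m - 1)) (2 ^ m) with hblk
  set M0 : ℝ := c * 2 ^ ((m : ℝ) / 2) with hM0
  have hM0nn : 0 ≤ M0 := by positivity
  have hM0sq : M0 * M0 = c ^ 2 * 2 ^ m := by
    rw [hM0]
    have : (2:ℝ) ^ ((m:ℝ)/2) * 2 ^ ((m:ℝ)/2) = 2 ^ m := by
      rw [← Real.rpow_add (by norm_num : (0:ℝ) < 2)]
      rw [show (m:ℝ)/2 + (m:ℝ)/2 = (m:ℝ) by ring]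
      exact Real.rpow_natCast 2 m
    nlinarith [this]
  -- coefficients bound
  have hcoef : ∀ k ∈ blk, |∫ t in Set.Ioo a b, φ k t| ≤
      M0 / (δ * 2 ^ m) * (xid δ (2 ^ m * (a - tpt m k)) + xid δ (2 ^ m * (b - tpt m k))) := by
    intro k hk
    have hk1 : 1 ≤ k := by
      have h1 : (0:ℕ) < 2 ^ (m - 1) := pow_pos (by norm_num) _
      have h2 := (Finset.mem_Ioc.mp hk).1
      omega
    exact coef_bound hδ0 (hmeas k) hp hM0nn
      (hdecay m hm k hk) (hmean k hk1) h0a hab hb1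
  -- decay of φ at x
  have hφx : ∀ k ∈ blk, |φ k x| ≤ M0 * xi δ (2 ^ m * (x - tpt m k)) :=
    fun k hk => hdecay m hm k hk x hxIcc
  set U : ℝ := xid δ (2 ^ m * (x - a)) with hU
  set V : ℝ := xid δ (2 ^ m * (x - b)) with hV
  have hUnn : 0 ≤ U := xid_nonneg _ _
  have hVnn : 0 ≤ V := xid_nonneg _ _
  set K1 : ℝ := c ^ 2 / δ * (2 * U) with hK1
  set K2 : ℝ := c ^ 2 / δ * (2 * V) with hK2
  have hK1nn : 0 ≤ K1 := by rw [hK1]; positivity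
  have hK2nn : 0 ≤ K2 := by rw [hK2]; positivity
  -- pointwise products
  have hprod : ∀ (y : ℝ) (T : ℝ), xi δ (2 ^ m * (x - T)) * xid δ (2 ^ m * (y - T)) ≤
      2 * xid δ (2 ^ m * (x - y)) * (xi δ (2 ^ m * (x - T)) + xi δ (2 ^ m * (y - T))) := by
    intro y T
    have := prod_bound hδ0 hδ1.le ((2:ℝ) ^ m * x) ((2:ℝ) ^ m * y) ((2:ℝ) ^ m * T)
    simpa [mul_sub] using this
  -- per-term bound
  have hterm : ∀ k ∈ blk, |(∫ t in Set.Ioo a b, φ k t) * φ k x| ≤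
      K1 * (xi δ (2 ^ m * (x - tpt m k)) + xi δ (2 ^ m * (a - tpt m k))) +
      K2 * (xi δ (2 ^ m * (x - tpt m k)) + xi δ (2 ^ m * (b - tpt m k))) := by
    intro k hk
    set T := tpt m k
    set A : ℝ := xid δ (2 ^ m * (a - T))
    set B : ℝ := xid δ (2 ^ m * (b - T))
    set W : ℝ := xi δ (2 ^ m * (x - T))
    set Wa : ℝ := xi δ (2 ^ m * (a - T))
    set Wb : ℝ := xi δ (2 ^ m * (b - T))
    have hAnn : 0 ≤ A := xid_nonneg _ _
    have hBnn : 0 ≤ B := xid_nonneg _ _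
    have hWnn : 0 ≤ W := xi_nonneg _ _
    have h1 : |(∫ t in Set.Ioo a b, φ k t) * φ k x| ≤
        (M0 / (δ * 2 ^ m) * (A + B)) * (M0 * W) := by
      rw [abs_mul]
      apply mul_le_mul (hcoef k hk) (hφx k hk) (abs_nonneg _)
      positivity
    have h2 : (M0 / (δ * 2 ^ m) * (A + B)) * (M0 * W) = c ^ 2 / δ * (W * A + W * B) := by
      have hδne : δ ≠ 0 := hδ0.ne'
      have hpne : (2:ℝ) ^ m ≠ 0 := hp.ne'
      have e1 : (M0 / (δ * 2 ^ m) * (A + B)) * (M0 * W) =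
          (M0 * M0) * ((A + B) * W) / (δ * 2 ^ m) := by ring
      rw [e1, hM0sq]
      field_simp
    have h3 : W * A ≤ 2 * U * (W + Wa) := hprod a T
    have h4 : W * B ≤ 2 * V * (W + Wb) := hprod b T
    calc |(∫ t in Set.Ioo a b, φ k t) * φ k x| ≤ (M0 / (δ * 2 ^ m) * (A + B)) * (M0 * W) := h1
      _ = c ^ 2 / δ * (W * A + W * B) := h2
      _ ≤ c ^ 2 / δ * (2 * U * (W + Wa) + 2 * V * (W + Wb)) := by
          have hcd : (0:ℝ) ≤ c ^ 2 / δ := by positivity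
          apply mul_le_mul_of_nonneg_left (add_le_add h3 h4) hcd
      _ = K1 * (W + Wa) + K2 * (W + Wb) := by rw [hK1, hK2]; ring
  -- grid sums
  have hgrid : ∀ y : ℝ, ∑ k ∈ blk, xi δ (2 ^ m * (y - tpt m k)) ≤ 4 + 2 / δ := by
    intro y
    have hgs := grid_sum hδ0 ((2 ^ m * y + 2 * (2:ℝ) ^ (m - 1) + 1) / 2) blk
    refine le_trans (le_of_eq (Finset.sum_congr rfl fun k _ => ?_)) hgs
    congr 1
    rw [tpt]
    field_simp
    ring
  -- assemble
  have hSig : ∀ y : ℝ, ∑ k ∈ blk, (xi δ (2 ^ m * (x - tpt m k)) + xi δ (2 ^ m * (y - tpt m k)))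
      ≤ 2 * (4 + 2 / δ) := by
    intro y
    rw [Finset.sum_add_distrib]
    have := hgrid x
    have := hgrid y
    linarith
  calc |∑ k ∈ blk, (∫ t in Set.Ioo a b, φ k t) * φ k x|
      ≤ ∑ k ∈ blk, |(∫ t in Set.Ioo a b, φ k t) * φ k x| := Finset.abs_sum_le_sum_abs _ _
    _ ≤ ∑ k ∈ blk, (K1 * (xi δ (2 ^ m * (x - tpt m k)) + xi δ (2 ^ m * (a - tpt m k))) +
          K2 * (xi δ (2 ^ m * (x - tpt m k)) + xi δ (2 ^ m * (b - tpt m k)))) :=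
        Finset.sum_le_sum hterm
    _ = K1 * (∑ k ∈ blk, (xi δ (2 ^ m * (x - tpt m k)) + xi δ (2 ^ m * (a - tpt m k)))) +
        K2 * (∑ k ∈ blk, (xi δ (2 ^ m * (x - tpt m k)) + xi δ (2 ^ m * (b - tpt m k)))) := by
        rw [Finset.sum_add_distrib, Finset.mul_sum, Finset.mul_sum]
    _ ≤ K1 * (2 * (4 + 2 / δ)) + K2 * (2 * (4 + 2 / δ)) := by
        apply add_le_add
        · exact mul_le_mul_of_nonneg_left (hSig a) hK1nn
        · exact mul_le_mul_of_nonneg_left (hSig b) hK2nn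
    _ = 4 * (4 + 2 / δ) * c ^ 2 / δ * (U + V) := by rw [hK1, hK2]; ring
    _ = 4 * (4 + 2 / δ) * c ^ 2 / δ *
        ((1 + 2 ^ m * |x - a|) ^ (-δ) + (1 + 2 ^ m * |x - b|) ^ (-δ)) := by
        congr 2
        · rw [hU, xid, abs_mul, abs_of_pos hp]
        · rw [hV, xid, abs_mul, abs_of_pos hp]
end
end

section
/- Let $(\phi_k)$, $2^{m-1}<k\le 2^m$, satisfy the Hölder condition $|\phi_k(t) - \phi_k(t')| \le c\,2^{m/2}(2^m|t-t'|)^{\alpha}\,\xi(2^m(t - t_k))$ for $|t-t'| \le 2^{-m}$, where $0<\alpha\le 1$ and $\xi(x)=(1+|x|)^{-(1+\delta)}$, $0<\delta<1$. Then for any integer $n > m$, any coefficients $a_k$, and any dyadic interval $J$ of length $2^{-(n-1)}$, the oscillation satisfies $\sum_{2^{m-1}<k\le 2^m} |a_k|\,\mathrm{osc}_J(\phi_k) \le C\, 2^{\alpha(m-n)}\, 2^{m/2} \sum_{2^{m-1}<k\le 2^m} |a_k|\, \xi(2^m(x - t_k))$ for any $x \in J$, where $\mathrm{osc}_J(\phi)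 = \sup_{u,v\in J}|\phi(u)-\phi(v)|$ and $C$ depends only on $c$, $\alpha$, $\delta$. -/
open MeasureTheory Set

noncomputable section

/-- The oscillation of a function over a set. -/
def osc (E : Set ℝ) (φ : ℝ → ℝ) : ℝ :=
  sSup {d | ∃ u ∈ E, ∃ v ∈ E, d = |φ u - φ v|}

lemma xi_pos (δ x : ℝ) : 0 < xi δ x :=
  Real.rpow_pos_of_pos (by positivity) _

lemma xi_comp (δ : ℝ) (hδ0 : 0 < δ) (hδ1 : δ < 1) {y y' : ℝ} (h : |y - y'| ≤ 1) :
    xi δ y ≤ 4 * xi δ y' := by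
  unfold xi
  have h1 : 1 + |y'| ≤ 2 * (1 + |y|) := by
    have : |y'| - |y| ≤ |y' - y| := abs_sub_abs_le_abs_sub _ _
    rw [abs_sub_comm] at this
    nlinarith [abs_nonneg y]
  have h2 : (2 * (1 + |y|)) ^ (-(1 + δ)) ≤ (1 + |y'|) ^ (-(1 + δ)) :=
    Real.rpow_le_rpow_of_nonpos (by positivity) h1 (by linarith)
  have h3 : (2 * (1 + |y|)) ^ (-(1 + δ)) =
      (2 : ℝ) ^ (-(1 + δ)) * (1 + |y|) ^ (-(1 + δ)) :=
    Real.mul_rpow (by norm_num) (by positivity)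
  have h4 : (4 : ℝ)⁻¹ ≤ (2 : ℝ) ^ (-(1 + δ)) := by
    have h5 : (2 : ℝ) ^ (-(2:ℝ)) ≤ (2 : ℝ) ^ (-(1 + δ)) :=
      Real.rpow_le_rpow_of_exponent_le (by norm_num) (by linarith)
    have h6 : (2 : ℝ) ^ (-(2:ℝ)) = (4:ℝ)⁻¹ := by
      rw [show (-(2:ℝ)) = ((-2 : ℤ) : ℝ) by norm_num, Real.rpow_intCast]
      norm_num
    calc (4:ℝ)⁻¹ = (2:ℝ) ^ (-(2:ℝ)) := h6.symm
      _ ≤ _ := h5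
  have h5 : (0:ℝ) < (1 + |y|) ^ (-(1 + δ)) := Real.rpow_pos_of_pos (by positivity) _
  nlinarith

/-- Oscillation estimate on a dyadic interval `J` of length `2^{-(n-1)}`, `n > m`. -/
theorem stmt8 (δ α c : ℝ) (hδ0 : 0 < δ) (hδ1 : δ < 1) (hα0 : 0 < α) (hα1 : α ≤ 1)
    (hc : 0 < c) :
    ∃ C : ℝ, 0 < C ∧
      ∀ (m : ℕ), 1 ≤ m →
        ∀ φ : ℕ → ℝ → ℝ,
          (∀ k ∈ Finset.Ioc (2 ^ (m - 1)) (2 ^ m),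
            ∀ t ∈ Set.Icc (0:ℝ) 1, ∀ t' ∈ Set.Icc (0:ℝ) 1, |t - t'| ≤ ((2 : ℝ) ^ m)⁻¹ →
              |φ k t - φ k t'| ≤
                c * 2 ^ ((m : ℝ) / 2) * (2 ^ m * |t - t'|) ^ α *
                  xi δ (2 ^ m * (t - tpt m k))) →
          ∀ n : ℕ, m < n → ∀ i : ℕ, i < 2 ^ (n - 1) →
            ∀ (a : ℕ → ℝ),
              ∀ x ∈ Set.Ico ((i : ℝ) / 2 ^ (n - 1)) (((i : ℝ) + 1) / 2 ^ (n - 1)),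
                ∑ k ∈ Finset.Ioc (2 ^ (m - 1)) (2 ^ m),
                    |a k| * osc (Set.Ico ((i : ℝ) / 2 ^ (n - 1)) (((i : ℝ) + 1) / 2 ^ (n - 1))) (φ k) ≤
                  C * (2 : ℝ) ^ (α * ((m : ℝ) - (n : ℝ))) * 2 ^ ((m : ℝ) / 2) *
                    ∑ k ∈ Finset.Ioc (2 ^ (m - 1)) (2 ^ m),
                      |a k| * xi δ (2 ^ m * (x - tpt m k)) := by
  refine ⟨8 * c, by positivity, ?_⟩
  intro m hm φ hH n hmn i hi a x hx
  set J : Set ℝ := Set.Ico ((i : ℝ) / 2 ^ (n - 1)) (((i : ℝ) + 1) / 2 ^ (n - 1)) with hJ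
  have hN : (0:ℝ) < 2 ^ (n - 1) := by positivity
  have hMN : (2:ℝ) ^ m ≤ 2 ^ (n - 1) := by
    apply pow_le_pow_right₀ one_le_two
    omega
  have hM : (0:ℝ) < 2 ^ m := by positivity
  -- J ⊆ [0,1]
  have hJ01 : J ⊆ Set.Icc (0:ℝ) 1 := by
    intro u hu
    obtain ⟨hu1, hu2⟩ := hu
    refine ⟨le_trans (by positivity) hu1, ?_⟩
    have h1 : ((i:ℝ) + 1) / 2 ^ (n - 1) ≤ 1 := by
      rw [div_le_one hN]
      have h' : (i:ℝ) + 1 ≤ ((2:ℕ) ^ (n-1) : ℕ) := by exact_mod_cast Nat.succ_le_of_lt hi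
      simpa using h'
    exact le_of_lt (lt_of_lt_of_le hu2 h1)
  -- distance between points of J
  have hdist : ∀ u ∈ J, ∀ v ∈ J, |u - v| ≤ ((2:ℝ) ^ (n-1))⁻¹ := by
    intro u hu v hv
    obtain ⟨hu1, hu2⟩ := hu
    obtain ⟨hv1, hv2⟩ := hv
    have hlen : ((i:ℝ)+1)/2^(n-1) - (i:ℝ)/2^(n-1) = ((2:ℝ)^(n-1))⁻¹ := by
      field_simp
      ring
    rw [abs_le]
    constructor <;> nlinarith [inv_pos.mpr hN]
  -- termwise bound
  have key : ∀ k ∈ Finset.Ioc (2 ^ (m - 1)) (2 ^ m),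
      osc J (φ k) ≤ 8 * c * (2:ℝ) ^ (α * ((m:ℝ) - n)) * 2 ^ ((m:ℝ)/2) *
        xi δ (2 ^ m * (x - tpt m k)) := by
    intro k hk
    have hξx : (0:ℝ) < xi δ (2 ^ m * (x - tpt m k)) := xi_pos _ _
    have hPpos : (0:ℝ) < (2:ℝ) ^ (α * ((m:ℝ) - n)) := Real.rpow_pos_of_pos two_pos _
    have hEpos : (0:ℝ) < (2:ℝ) ^ ((m:ℝ)/2) := Real.rpow_pos_of_pos two_pos _
    apply Real.sSup_le
    · rintro d ⟨u, hu, v, hv, rfl⟩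
      have huv : |u - v| ≤ ((2:ℝ) ^ m)⁻¹ :=
        le_trans (hdist u hu v hv) (by
          exact inv_anti₀ hM hMN)
      have hb := hH k hk u (hJ01 hu) v (hJ01 hv) huv
      -- bound the rpow factor
      have hfac : ((2:ℝ) ^ m * |u - v|) ^ α ≤ 2 * (2:ℝ) ^ (α * ((m:ℝ) - n)) := by
        have h1 : ((2:ℝ) ^ m * |u - v|) ^ α ≤ ((2:ℝ)^m * ((2:ℝ)^(n-1))⁻¹) ^ α := by
          apply Real.rpow_le_rpow (by positivity)
            (mul_le_mul_of_nonneg_left (hdist u hu v hv) (le_of_lt hM)) (le_of_lt hα0)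
        have hn1 : ((n - 1 : ℕ) : ℝ) = (n:ℝ) - 1 := by
          have h1n : 1 ≤ n := by omega
          push_cast [Nat.cast_sub h1n]
          ring
        have h2 : (2:ℝ)^m * ((2:ℝ)^(n-1))⁻¹ = (2:ℝ) ^ ((m:ℝ) - ((n:ℝ) - 1)) := by
          rw [Real.rpow_sub two_pos, ← hn1, Real.rpow_natCast, Real.rpow_natCast]
          rfl
        have h3 : ((2:ℝ) ^ ((m:ℝ) - ((n:ℝ) - 1))) ^ α =
            (2:ℝ) ^ (α * ((m:ℝ) - n)) * (2:ℝ) ^ α := by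
          rw [← Real.rpow_mul (by norm_num : (0:ℝ) ≤ 2)]
          rw [show ((m:ℝ) - ((n:ℝ) - 1)) * α = α * ((m:ℝ) - n) + α by ring]
          rw [Real.rpow_add two_pos]
        have h4 : (2:ℝ) ^ α ≤ 2 := by
          calc (2:ℝ) ^ α ≤ (2:ℝ) ^ (1:ℝ) :=
                Real.rpow_le_rpow_of_exponent_le one_le_two hα1
            _ = 2 := Real.rpow_one 2
        calc ((2:ℝ) ^ m * |u - v|) ^ α ≤ ((2:ℝ)^m * ((2:ℝ)^(n-1))⁻¹) ^ α := h1
          _ = (2:ℝ) ^ (α * ((m:ℝ) - n)) * (2:ℝ) ^ α := by rw [h2, h3]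
          _ ≤ (2:ℝ) ^ (α * ((m:ℝ) - n)) * 2 :=
              mul_le_mul_of_nonneg_left h4 (le_of_lt hPpos)
          _ = 2 * (2:ℝ) ^ (α * ((m:ℝ) - n)) := by ring
      have hxi : xi δ (2 ^ m * (u - tpt m k)) ≤ 4 * xi δ (2 ^ m * (x - tpt m k)) := by
        apply xi_comp δ hδ0 hδ1
        have he : (2:ℝ) ^ m * (u - tpt m k) - 2 ^ m * (x - tpt m k) = 2 ^ m * (u - x) := by
          ring
        rw [he, abs_mul, abs_of_pos hM]
        calc (2:ℝ)^m * |u - x| ≤ (2:ℝ)^m * ((2:ℝ)^(n-1))⁻¹ :=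
              mul_le_mul_of_nonneg_left (hdist u hu x hx) (le_of_lt hM)
          _ ≤ 1 := by
              rw [mul_inv_le_iff₀ hN, one_mul]
              exact hMN
      calc |φ k u - φ k v| ≤ c * 2 ^ ((m:ℝ)/2) * ((2:ℝ)^m * |u - v|) ^ α *
            xi δ (2 ^ m * (u - tpt m k)) := hb
        _ ≤ c * 2 ^ ((m:ℝ)/2) * (2 * (2:ℝ) ^ (α * ((m:ℝ) - n))) *
            (4 * xi δ (2 ^ m * (x - tpt m k))) := by
            apply mul_le_mul
              (mul_le_mul_of_nonneg_left hfac (by positivity)) hxi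
              (le_of_lt (xi_pos _ _)) (by positivity)
        _ = 8 * c * (2:ℝ) ^ (α * ((m:ℝ) - n)) * 2 ^ ((m:ℝ)/2) *
            xi δ (2 ^ m * (x - tpt m k)) := by ring
    · positivity
  calc ∑ k ∈ Finset.Ioc (2 ^ (m - 1)) (2 ^ m), |a k| * osc J (φ k)
      ≤ ∑ k ∈ Finset.Ioc (2 ^ (m - 1)) (2 ^ m),
          |a k| * (8 * c * (2:ℝ) ^ (α * ((m:ℝ) - n)) * 2 ^ ((m:ℝ)/2) *
            xi δ (2 ^ m * (x - tpt m k))) := by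
        apply Finset.sum_le_sum
        intro k hk
        exact mul_le_mul_of_nonneg_left (key k hk) (abs_nonneg _)
    _ = 8 * c * (2:ℝ) ^ (α * ((m:ℝ) - n)) * 2 ^ ((m:ℝ)/2) *
          ∑ k ∈ Finset.Ioc (2 ^ (m - 1)) (2 ^ m), |a k| * xi δ (2 ^ m * (x - tpt m k)) := by
        rw [Finset.mul_sum]
        apply Finset.sum_congr rfl
        intro k _
        ring
end
end
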